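/- Under conditions (i) the map α: C → Hom(A/C, N), c ↦ ([a] ↦ (a,c)), is a group isomorphism, and (ii) the natural restriction map Hom(A/(B+C), N) → Hom(A'/(B+C), N) is surjective, the following holds. Let F¹ be the image of B^⊥ ∩ C in B^⊥/B and F² the image of A'^⊥ ∩ C in B^⊥/B. Then F² ⊆ F¹, the quotient (B^⊥/B)/F¹ is isomorphic to the image of the natural map B^⊥ → A'/(B+C), the quotient F¹/F² is isomorphic to Hom(A'/(B+C), N), and F² is isomorphic to the cokernel of β. -/

import Mathlib

namespace OrthPairing

variable {A N : Type*} [AddCommGroup A] [AddCommGroup N]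

/-- The orthogonal `E^⊥ = {a ∈ A | (a, e) = 0 for all e ∈ E}` of a subgroup `E` of `A`
with respect to a bilinear pairing `b : A × A → N`. -/
def orth (b : A →+ A →+ N) (E : AddSubgroup A) : AddSubgroup A where
  carrier := {a : A | ∀ e ∈ E, b a e = 0}
  zero_mem' := by intro e he; simp
  add_mem' := by
    intro x y hx hy e he
    simp [hx e he, hy e he]
  neg_mem' := by
    intro x hx e he
    simp [hx e he]

/-- The map `C → Hom(A/D, N)`, `c ↦ ([a] ↦ (a, c))`, defined whenever `(x, c) = 0`
for all `x ∈ D` and `c ∈ C`. -/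
def mapToHom (b : A →+ A →+ N) (C D : AddSubgroup A)
    (h : ∀ c ∈ C, ∀ x ∈ D, b x c = 0) : ↥C →+ (A ⧸ D) →+ N where
  toFun c := QuotientAddGroup.lift D (b.flip (c : A)) (fun x hx => h c c.2 x hx)
  map_zero' := AddMonoidHom.ext fun q =>
    QuotientAddGroup.induction_on q (fun a => by simp)
  map_add' x y := AddMonoidHom.ext fun q =>
    QuotientAddGroup.induction_on q (fun a => by simp; rfl)

/-- `F¹`: the image of `B^⊥ ∩ C` in `B^⊥/B`. -/
def Fone (b : A →+ A →+ N) (B C : AddSubgroup A) :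
    AddSubgroup (↥(orth b B) ⧸ B.addSubgroupOf (orth b B)) :=
  AddSubgroup.map (QuotientAddGroup.mk' (B.addSubgroupOf (orth b B)))
    ((orth b B ⊓ C).addSubgroupOf (orth b B))

/-- `F²`: the image of `A'^⊥ ∩ C` in `B^⊥/B`, where `A' = (B ∩ C)^⊥`. -/
def Ftwo (b : A →+ A →+ N) (B C : AddSubgroup A) :
    AddSubgroup (↥(orth b B) ⧸ B.addSubgroupOf (orth b B)) :=
  AddSubgroup.map (QuotientAddGroup.mk' (B.addSubgroupOf (orth b B)))
    ((orth b (orth b (B ⊓ C)) ⊓ C).addSubgroupOf (orth b B))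

/-- The natural map `B^⊥ → A'/(B+C)` (recall `B^⊥ ⊆ A' = (B ∩ C)^⊥`). -/
def natMap (b : A →+ A →+ N) (B C : AddSubgroup A) :
    ↥(orth b B) →+ ↥(orth b (B ⊓ C)) ⧸ (B ⊔ C).addSubgroupOf (orth b (B ⊓ C)) :=
  (QuotientAddGroup.mk' ((B ⊔ C).addSubgroupOf (orth b (B ⊓ C)))).comp
    (AddSubgroup.inclusion (fun x hx e he => hx e he.1))

/-! ### Auxiliary definitions -/

theorem orth_antitone {b : A →+ A →+ N} {E F : AddSubgroup A} (h : E ≤ F) :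
    orth b F ≤ orth b E := fun _ hx e he => hx e (h he)

/-- ψ₁ : B^⊥ ∩ C →+ Hom(A'/(B+C), N). -/
def psiOne (b : A →+ A →+ N) (B C : AddSubgroup A)
    (hv : ∀ c : ↥(orth b B ⊓ C), ∀ x ∈ B ⊔ C, b x (c : A) = 0) :
    ↥(orth b B ⊓ C) →+
      ((↥(orth b (B ⊓ C)) ⧸ (B ⊔ C).addSubgroupOf (orth b (B ⊓ C))) →+ N) where
  toFun c := QuotientAddGroup.lift _ ((b.flip (c : A)).comp (orth b (B ⊓ C)).subtype)
      (fun x hx => hv c x hx)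
  map_zero' := AddMonoidHom.ext fun q => QuotientAddGroup.induction_on q fun a => by simp
  map_add' x y := AddMonoidHom.ext fun q => QuotientAddGroup.induction_on q fun a => by simp; rfl

/-- ψ₂-core : A'^⊥ ∩ C →+ Hom(A/A', N). -/
def psiTwoCore (b : A →+ A →+ N) (B C : AddSubgroup A)
    (hv : ∀ c : ↥(orth b (orth b (B ⊓ C)) ⊓ C), ∀ x ∈ orth b (B ⊓ C), b x (c : A) = 0) :
    ↥(orth b (orth b (B ⊓ C)) ⊓ C) →+ ((A ⧸ orth b (B ⊓ C)) →+ N) where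
  toFun c := QuotientAddGroup.lift _ (b.flip (c : A)) (fun x hx => hv c x hx)
  map_zero' := AddMonoidHom.ext fun q => QuotientAddGroup.induction_on q fun a => by simp
  map_add' x y := AddMonoidHom.ext fun q => QuotientAddGroup.induction_on q fun a => by simp; rfl

/-- Proposition 2.1: let `(·,·) : A × A → N` be a (anti)symmetric bilinear pairing on an abelian
group, `B, C ⊆ A` isotropic subgroups and `A' = (B ∩ C)^⊥`.  Suppose (i) the map
`α : C → Hom(A/C, N)`, `c ↦ ([a] ↦ (a,c))`, is an isomorphism, and (ii) the restriction map
`Hom(A/(B+C), N) → Hom(A'/(B+C), N)` is surjective.  Let `F¹, F²` be the images in `B^⊥/B` of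
`B^⊥ ∩ C` and `A'^⊥ ∩ C` respectively.  Then `F² ⊆ F¹`, `(B^⊥/B)/F¹` is isomorphic to the image
of the natural map `B^⊥ → A'/(B+C)`, `F¹/F²` is isomorphic to `Hom(A'/(B+C), N)`, and `F²` is
isomorphic to the cokernel of `β : B ∩ C → Hom(A/A', N)`, `c ↦ ([a] ↦ (a,c))`. -/
theorem filtration_on_orthogonal_quotient (b : A →+ A →+ N) (B C : AddSubgroup A)
    (hsym : (∀ x y : A, b x y = b y x) ∨ (∀ x y : A, b x y = - b y x))
    (hB : B ≤ orth b B) (hC : C ≤ orth b C)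
    (hα : Function.Bijective ⇑(mapToHom b C C (fun c hc x hx => hC hx c hc)))
    (hres : Function.Surjective fun f : (A ⧸ (B ⊔ C)) →+ N =>
      f.comp (QuotientAddGroup.map ((B ⊔ C).addSubgroupOf (orth b (B ⊓ C))) (B ⊔ C)
        (orth b (B ⊓ C)).subtype (fun x hx => hx))) :
    Ftwo b B C ≤ Fone b B C ∧
    Nonempty (((↥(orth b B) ⧸ B.addSubgroupOf (orth b B)) ⧸ Fone b B C) ≃+
      ↥(natMap b B C).range) ∧
    Nonempty ((↥(Fone b B C) ⧸ (Ftwo b B C).addSubgroupOf (Fone b B C)) ≃+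
      ((↥(orth b (B ⊓ C)) ⧸ (B ⊔ C).addSubgroupOf (orth b (B ⊓ C))) →+ N)) ∧
    Nonempty (↥(Ftwo b B C) ≃+
      (((A ⧸ orth b (B ⊓ C)) →+ N) ⧸
        (mapToHom b (B ⊓ C) (orth b (B ⊓ C)) (fun c hc x hx => hx c hc)).range)) := by
  -- basic facts
  have hz : ∀ x y : A, b x y = 0 → b y x = 0 := by
    rcases hsym with h | h
    · intro x y hxy; rw [h y x]; exact hxy
    · intro x y hxy; rw [h y x, hxy, neg_zero]
  have hBA' : B ≤ orth b (B ⊓ C) := fun x hx e he => hB hx e he.1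
  have hCA' : C ≤ orth b (B ⊓ C) := fun x hx e he => hC hx e he.2
  have hApBp : orth b (orth b (B ⊓ C)) ≤ orth b B := orth_antitone hBA'
  have hBCAp : B ⊓ C ≤ orth b (orth b (B ⊓ C)) := fun x hx e he => hz _ _ (he x hx)
  have hv1 : ∀ c : ↥(orth b B ⊓ C), ∀ x ∈ B ⊔ C, b x (c : A) = 0 := by
    intro c x hx
    have : B ⊔ C ≤ (b.flip (c : A)).ker := by
      refine sup_le (fun y hy => ?_) (fun y hy => ?_)
      · exact AddMonoidHom.mem_ker.mpr (hz _ _ (c.2.1 y hy))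
      · exact AddMonoidHom.mem_ker.mpr (hC hy (c : A) c.2.2)
    exact this hx
  have hv2 : ∀ c : ↥(orth b (orth b (B ⊓ C)) ⊓ C), ∀ x ∈ orth b (B ⊓ C), b x (c : A) = 0 :=
    fun c x hx => hz _ _ (c.2.1 x hx)
  -- Part 1 : F² ≤ F¹
  have part1 : Ftwo b B C ≤ Fone b B C := by
    refine AddSubgroup.map_mono (fun x hx => ?_)
    rw [AddSubgroup.mem_addSubgroupOf] at hx ⊢
    exact ⟨hApBp hx.1, hx.2⟩
  refine ⟨part1, ?_, ?_, ?_⟩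
  -- Part 2
  · set N₀ := B.addSubgroupOf (orth b B) with hN₀
    set M₁ := (orth b B ⊓ C).addSubgroupOf (orth b B) with hM₁
    set M₀ := N₀ ⊔ M₁ with hM₀
    have hFone_eq : Fone b B C = M₀.map (QuotientAddGroup.mk' N₀) := by
      rw [hM₀, AddSubgroup.map_sup, QuotientAddGroup.map_mk'_self, bot_sup_eq]
      rfl
    have hker : (natMap b B C).ker = M₀ := by
      ext x
      constructor
      · intro hx
        have hx' : (x : A) ∈ B ⊔ C := by
          have := (QuotientAddGroup.eq_zero_iff _).mp hx
          exact this
        obtain ⟨u, hu, v, hv, huv⟩ := AddSubgroup.mem_sup.mp hx'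
        have hvBp : v ∈ orth b B := by
          have h1 : (x : A) - u ∈ orth b B := sub_mem x.2 (hB hu)
          rwa [← huv, add_sub_cancel_left] at h1
        refine AddSubgroup.mem_sup.mpr ⟨⟨u, hB hu⟩, ?_, ⟨v, hvBp⟩, ?_, ?_⟩
        · exact AddSubgroup.mem_addSubgroupOf.mpr hu
        · exact AddSubgroup.mem_addSubgroupOf.mpr ⟨hvBp, hv⟩
        · exact Subtype.ext huv
      · intro hx
        have : M₀ ≤ (natMap b B C).ker := by
          refine sup_le (fun y hy => ?_) (fun y hy => ?_)
        
          · refine AddMonoidHom.mem_ker.mpr ?_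
            refine (QuotientAddGroup.eq_zero_iff _).mpr ?_
            exact AddSubgroup.mem_addSubgroupOf.mpr
              (AddSubgroup.mem_sup_left (AddSubgroup.mem_addSubgroupOf.mp hy))
          · refine AddMonoidHom.mem_ker.mpr ?_
            refine (QuotientAddGroup.eq_zero_iff _).mpr ?_
            exact AddSubgroup.mem_addSubgroupOf.mpr
              (AddSubgroup.mem_sup_right (AddSubgroup.mem_addSubgroupOf.mp hy).2)
        exact this hx
    refine ⟨((QuotientAddGroup.quotientAddEquivOfEq hFone_eq).trans
      (QuotientAddGroup.quotientQuotientEquivQuotient N₀ M₀ le_sup_left)).trans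
      ((QuotientAddGroup.quotientAddEquivOfEq hker.symm).trans
      (QuotientAddGroup.quotientKerEquivRange (natMap b B C)))⟩
  -- Part 3
  · let ι₁ : ↥(orth b B ⊓ C) →+ ↥(orth b B) ⧸ B.addSubgroupOf (orth b B) :=
      (QuotientAddGroup.mk' (B.addSubgroupOf (orth b B))).comp
        (AddSubgroup.inclusion inf_le_left)
    have hι₁ : ∀ c, ι₁ c ∈ Fone b B C := fun c =>
      ⟨AddSubgroup.inclusion inf_le_left c, AddSubgroup.mem_addSubgroupOf.mpr c.2, rfl⟩
    let Θ₁ : ↥(orth b B ⊓ C) →+ ↥(Fone b B C) := ι₁.codRestrict _ hι₁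
    have hΘ₁surj : Function.Surjective Θ₁ := by
      rintro ⟨q, x, hx, rfl⟩
      exact ⟨⟨(x : A), AddSubgroup.mem_addSubgroupOf.mp hx⟩, Subtype.ext rfl⟩
    let Φ : ↥(orth b B ⊓ C) →+
        ↥(Fone b B C) ⧸ (Ftwo b B C).addSubgroupOf (Fone b B C) :=
      (QuotientAddGroup.mk' ((Ftwo b B C).addSubgroupOf (Fone b B C))).comp Θ₁
    have hΦsurj : Function.Surjective Φ :=
      (QuotientAddGroup.mk'_surjective _).comp hΘ₁surj
    let ψ₁ := psiOne b B C hv1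
    have hψ₁surj : Function.Surjective ψ₁ := by
      intro f
      obtain ⟨g, hg⟩ := hres f
      let g' : (A ⧸ C) →+ N :=
        g.comp (QuotientAddGroup.map C (B ⊔ C) (AddMonoidHom.id A)
          (fun x hx => AddSubgroup.mem_sup_right hx))
      obtain ⟨c, hc⟩ := hα.2 g'
      have hcval : ∀ a : A, b a (c : A) = g (QuotientAddGroup.mk a) := by
        intro a
        have := DFunLike.congr_fun hc (QuotientAddGroup.mk a : A ⧸ C)
        exact this
      have hcB : (c : A) ∈ orth b B := by
        intro e he
        refine hz _ _ ?_
        rw [hcval e, show ((QuotientAddGroup.mk e : A ⧸ (B ⊔ C))) = 0 from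
          (QuotientAddGroup.eq_zero_iff _).mpr (AddSubgroup.mem_sup_left he), map_zero]
      refine ⟨⟨(c : A), hcB, c.2⟩, ?_⟩
      refine AddMonoidHom.ext fun q => QuotientAddGroup.induction_on q fun a => ?_
      show b (a : A) (c : A) = f _
      rw [hcval (a : A), ← hg]
      rfl
    have hkerΦψ : Φ.ker = ψ₁.ker := by
      ext x
      constructor
      · intro hx
        have hx' : Θ₁ x ∈ (Ftwo b B C).addSubgroupOf (Fone b B C) :=
          (QuotientAddGroup.eq_zero_iff _).mp hx
        have hx'' : ι₁ x ∈ Ftwo b B C := AddSubgroup.mem_addSubgroupOf.mp hx'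
        obtain ⟨y, hy0, hyx⟩ := hx''
        have hy : (y : A) ∈ orth b (orth b (B ⊓ C)) ⊓ C := hy0
        have hd : -(y : A) + (x : A) ∈ B := by
          have h1 : -y + AddSubgroup.inclusion inf_le_left x ∈ B.addSubgroupOf (orth b B) :=
            (QuotientAddGroup.eq).mp hyx
          exact AddSubgroup.mem_addSubgroupOf.mp h1
        have hdC : -(y : A) + (x : A) ∈ C := add_mem (neg_mem hy.2) x.2.2
        refine AddMonoidHom.mem_ker.mpr ?_
        refine AddMonoidHom.ext fun q => QuotientAddGroup.induction_on q fun a => ?_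
        show b (a : A) (x : A) = 0
        have hxdec : (x : A) = (y : A) + (-(y : A) + (x : A)) := by abel
        rw [hxdec, map_add, hz _ _ (hy.1 (a : A) a.2), a.2 _ ⟨hd, hdC⟩, add_zero]
      · intro hx
        have hx' : ∀ a : ↥(orth b (B ⊓ C)), b (a : A) (x : A) = 0 := by
          intro a
          have := DFunLike.congr_fun (AddMonoidHom.mem_ker.mp hx)
            (QuotientAddGroup.mk a : _)
          exact this
        have hxAp : (x : A) ∈ orth b (orth b (B ⊓ C)) :=
          fun e he => hz _ _ (hx' ⟨e, he⟩)
        refine AddMonoidHom.mem_ker.mpr ?_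
        refine (QuotientAddGroup.eq_zero_iff _).mpr ?_
        refine AddSubgroup.mem_addSubgroupOf.mpr ?_
        exact ⟨AddSubgroup.inclusion inf_le_left x,
          AddSubgroup.mem_addSubgroupOf.mpr ⟨hxAp, x.2.2⟩, rfl⟩
    exact ⟨((QuotientAddGroup.quotientKerEquivOfSurjective Φ hΦsurj).symm.trans
      (QuotientAddGroup.quotientAddEquivOfEq hkerΦψ)).trans
      (QuotientAddGroup.quotientKerEquivOfSurjective ψ₁ hψ₁surj)⟩
  -- Part 4
  · have hsub : orth b (orth b (B ⊓ C)) ⊓ C ≤ orth b B := fun x hx => hApBp hx.1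
    let ι₂ : ↥(orth b (orth b (B ⊓ C)) ⊓ C) →+ ↥(orth b B) ⧸ B.addSubgroupOf (orth b B) :=
      (QuotientAddGroup.mk' (B.addSubgroupOf (orth b B))).comp (AddSubgroup.inclusion hsub)
    have hι₂ : ∀ c, ι₂ c ∈ Ftwo b B C := fun c =>
      ⟨AddSubgroup.inclusion hsub c, AddSubgroup.mem_addSubgroupOf.mpr c.2, rfl⟩
    let Θ₂ : ↥(orth b (orth b (B ⊓ C)) ⊓ C) →+ ↥(Ftwo b B C) := ι₂.codRestrict _ hι₂
    have hΘ₂surj : Function.Surjective Θ₂ := by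
      rintro ⟨q, x, hx, rfl⟩
      exact ⟨⟨(x : A), AddSubgroup.mem_addSubgroupOf.mp hx⟩, Subtype.ext rfl⟩
    let β := mapToHom b (B ⊓ C) (orth b (B ⊓ C)) (fun c hc x hx => hx c hc)
    let ψ₂ : ↥(orth b (orth b (B ⊓ C)) ⊓ C) →+
        (((A ⧸ orth b (B ⊓ C)) →+ N) ⧸ β.range) :=
      (QuotientAddGroup.mk' β.range).comp (psiTwoCore b B C hv2)
    have hψ₂surj : Function.Surjective ψ₂ := by
      intro q
      refine QuotientAddGroup.induction_on q fun f => ?_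
      let g' : (A ⧸ C) →+ N :=
        f.comp (QuotientAddGroup.map C (orth b (B ⊓ C)) (AddMonoidHom.id A) hCA')
      obtain ⟨c, hc⟩ := hα.2 g'
      have hcval : ∀ a : A, b a (c : A) = f (QuotientAddGroup.mk a) := by
        intro a
        have := DFunLike.congr_fun hc (QuotientAddGroup.mk a : A ⧸ C)
        exact this
      have hcAp : (c : A) ∈ orth b (orth b (B ⊓ C)) := by
        intro e he
        refine hz _ _ ?_
        rw [hcval e, show ((QuotientAddGroup.mk e : A ⧸ orth b (B ⊓ C))) = 0 from
          (QuotientAddGroup.eq_zero_iff _).mpr he, map_zero]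
      refine ⟨⟨(c : A), hcAp, c.2⟩, ?_⟩
      have : psiTwoCore b B C hv2 ⟨(c : A), hcAp, c.2⟩ = f := by
        refine AddMonoidHom.ext fun q' => QuotientAddGroup.induction_on q' fun a => ?_
        exact hcval a
      show QuotientAddGroup.mk (psiTwoCore b B C hv2 ⟨(c : A), hcAp, c.2⟩) = _
      rw [this]
    have hker₂ : Θ₂.ker = ψ₂.ker := by
      ext x
      have hxB_iff : x ∈ Θ₂.ker ↔ (x : A) ∈ B := by
        constructor
        · intro hx
          have : ι₂ x = 0 := congrArg Subtype.val (AddMonoidHom.mem_ker.mp hx)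
          have := (QuotientAddGroup.eq_zero_iff _).mp this
          exact AddSubgroup.mem_addSubgroupOf.mp this
        · intro hx
          refine AddMonoidHom.mem_ker.mpr (Subtype.ext ?_)
          exact (QuotientAddGroup.eq_zero_iff _).mpr (AddSubgroup.mem_addSubgroupOf.mpr hx)
      rw [hxB_iff]
      constructor
      · intro hx
        refine AddMonoidHom.mem_ker.mpr ?_
        refine (QuotientAddGroup.eq_zero_iff _).mpr ?_
        refine ⟨⟨(x : A), hx, x.2.2⟩, ?_⟩
        refine AddMonoidHom.ext fun q' => QuotientAddGroup.induction_on q' fun a => ?_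
        rfl
      · intro hx
        have hx' : psiTwoCore b B C hv2 x ∈ β.range :=
          (QuotientAddGroup.eq_zero_iff _).mp (AddMonoidHom.mem_ker.mp hx)
        obtain ⟨d, hd⟩ := hx'
        have hvals : ∀ a : A, b a (x : A) = b a (d : A) := by
          intro a
          have := DFunLike.congr_fun hd (QuotientAddGroup.mk a : A ⧸ orth b (B ⊓ C))
          exact this.symm
        have : (⟨(x : A), x.2.2⟩ : ↥C) = ⟨(d : A), d.2.2⟩ := by
          refine hα.1 ?_
          refine AddMonoidHom.ext fun q' => QuotientAddGroup.induction_on q' fun a => ?_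
          exact hvals a
        have hxd : (x : A) = (d : A) := congrArg Subtype.val this
        rw [hxd]
        exact d.2.1
    exact ⟨((QuotientAddGroup.quotientKerEquivOfSurjective Θ₂ hΘ₂surj).symm.trans
      (QuotientAddGroup.quotientAddEquivOfEq hker₂)).trans
      (QuotientAddGroup.quotientKerEquivOfSurjective ψ₂ hψ₂surj)⟩



end OrthPairing
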